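/- Assume K ≠ ℚ and let η ∈ Z_K generate a multiplicative ℤ[G]-module of ℤ-rank n = [K:ℚ]. Then there is a bound p_0 such that for every prime p > p_0, unramified in K and prime to η, whose residue degree n_p in K/ℚ is greater than 1, the order d of the image of η in the quotient group (Z_K/pZ_K)^× / (image of μ_K) does not divide p − 1, where μ_K is the group of roots of unity of K. -/

import Mathlib

open NumberField Polynomial

set_option maxHeartbeats 1000000
set_option synthInstance.maxHeartbeats 400000

noncomputable section

/-- `x` is a `p`-integer of `K`, i.e. `x` lies in the localization `Z_{K,(p)}` of the
ring of integers of `K` away from `p` (denominators prime to `p`). -/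
def IsPInt (K : Type*) [Field K] [NumberField K] (p : ℕ) (x : K) : Prop :=
  ∃ (a : 𝓞 K) (d : ℤ), ¬ (p : ℤ) ∣ d ∧ (d : K) * x = (a : K)

/-- `x ∈ I · Z_{K,(p)}`, for an ideal `I` of the ring of integers of `K`. -/
def MemPIdeal (K : Type*) [Field K] [NumberField K] (p : ℕ) (I : Ideal (𝓞 K)) (x : K) : Prop :=
  ∃ (a : 𝓞 K) (d : ℤ), ¬ (p : ℤ) ∣ d ∧ a ∈ I ∧ (d : K) * x = (a : K)

/-- `x ∈ K^×` is prime to `p` : it is a unit at every place of `K` above `p`. -/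
def PrimeToP (K : Type*) [Field K] [NumberField K] (p : ℕ) (x : K) : Prop :=
  IsPInt K p x ∧ IsPInt K p x⁻¹

/-- the prime `p` is unramified in `K`. -/
def UnramifiedIn (K : Type*) [Field K] [NumberField K] (p : ℕ) : Prop :=
  ∀ P : Ideal (𝓞 K), P.IsPrime → (p : 𝓞 K) ∈ P →
    Ideal.ramificationIdx' (Ideal.span {(p : ℤ)}) P = 1

/-- `np` is the common residue degree of the primes of `K` above `p`. -/
def ResidueDeg (K : Type*) [Field K] [NumberField K] (p np : ℕ) : Prop :=
  ∀ P : Ideal (𝓞 K), P.IsPrime → (p : 𝓞 K) ∈ P →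
    Ideal.inertiaDeg' (Ideal.span {(p : ℤ)}) P = np

/-- a rational number is a `p`-integer, i.e. lies in `ℤ_(p)`. -/
def RatIsPInt (p : ℕ) (q : ℚ) : Prop :=
  ∃ a d : ℤ, ¬ (p : ℤ) ∣ d ∧ (d : ℚ) * q = (a : ℚ)

/-- the generalized Fermat quotient `α_p(x) = (x^{p^{n_p}-1} - 1)/p`. -/
def alphaP (K : Type*) [Field K] [NumberField K] (p np : ℕ) (x : K) : K :=
  (x ^ (p ^ np - 1) - 1) / p

lemma aux_intCast_pow_char {R : Type*} [CommRing R] (p : ℕ) [Fact p.Prime] [CharP R p] (m : ℤ) :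
    (m : R) ^ p = (m : R) := by
  have h : ((m ^ p - m : ℤ) : ZMod p) = 0 := by
    push_cast
    rw [ZMod.pow_card]
    ring
  obtain ⟨c, hc⟩ := (ZMod.intCast_zmod_eq_zero_iff_dvd _ _).mp h
  have h2 : ((m ^ p - m : ℤ) : R) = 0 := by
    rw [hc]
    push_cast
    rw [CharP.cast_eq_zero (R := R) p]
    ring
  push_cast at h2
  linear_combination h2

lemma aux_aeval_pow_char {R : Type*} [CommRing R] (p : ℕ) [Fact p.Prime] [CharP R p]
    (y : R) (q : ℤ[X]) : Polynomial.aeval (y ^ p) q = (Polynomial.aeval y q) ^ p := by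
  induction q using Polynomial.induction_on' with
  | add f g hf hg => rw [map_add, map_add, hf, hg, add_pow_char]
  | monomial i a =>
      rw [Polynomial.aeval_monomial, Polynomial.aeval_monomial, mul_pow, ← pow_mul, ← pow_mul,
        mul_comm i p]
      congr 1
      have := aux_intCast_pow_char p (R := R) a
      simpa [algebraMap_int_eq, eq_intCast] using this.symm

/-- the multiplicative `ℤ[G]`-module generated by `η` is of `ℤ`-rank `n = [K:ℚ]`:
the conjugates of `η` are multiplicatively independent modulo torsion. -/
def GenRankN (K : Type*) [Field K] [NumberField K] (η : K) : Prop :=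
  ∀ u : (K ≃ₐ[ℚ] K) → ℤ,
    (∃ k : ℕ, 0 < k ∧ (∏ ν : K ≃ₐ[ℚ] K, (ν η) ^ (u ν)) ^ k = 1) → ∀ ν, u ν = 0

/-- Lemma 6.3 (ii). Assume `K ≠ ℚ` and let `η ∈ Z_K` generate a
multiplicative `ℤ[G]`-module of `ℤ`-rank `n = [K:ℚ]`. Then there is a bound `p₀` such that
for every prime `p > p₀`, unramified in `K`, prime to `η`, with residue degree `n_p > 1`,
the order `d` of the image of `η` in `(Z_K/pZ_K)^× / (image of μ_K)` does not divide `p−1`;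
equivalently, `η^{p−1}` is not congruent modulo `p` to a root of unity of `K`. -/
theorem statement14 (K : Type*) [Field K] [NumberField K] [IsGalois ℚ K]
    (hK : 1 < Module.finrank ℚ K)
    (η : 𝓞 K) (hrank : GenRankN K (η : K)) :
    ∃ p0 : ℕ, ∀ p : ℕ, p0 < p → p.Prime → UnramifiedIn K p → PrimeToP K p (η : K) →
      ∀ np : ℕ, ResidueDeg K p np → 1 < np →
      ¬ ∃ ζ : 𝓞 K, (∃ k : ℕ, 0 < k ∧ ζ ^ k = 1) ∧
        η ^ (p - 1) - ζ ∈ Ideal.span {(p : 𝓞 K)} := by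
  classical
  have hPex : ∀ p : ℕ, p.Prime → ∃ P : Ideal (𝓞 K), P.IsMaximal ∧
      P.comap (algebraMap ℤ (𝓞 K)) = Ideal.span {(p : ℤ)} := by
    intro p hp
    have hmax : (Ideal.span {(p : ℤ)}).IsMaximal := by
      refine PrincipalIdealRing.isMaximal_of_irreducible ?_
      exact (Int.prime_iff_natAbs_prime.mpr (by simpa using hp)).irreducible
    have hker : RingHom.ker (algebraMap ℤ (𝓞 K)) ≤ Ideal.span {(p : ℤ)} := by
      rw [(RingHom.injective_iff_ker_eq_bot _).mp (RingHom.injective_int (algebraMap ℤ (𝓞 K)))]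
      exact bot_le
    exact Ideal.exists_ideal_over_maximal_of_isIntegral _ hker
  have hpmemP : ∀ (p : ℕ) (P : Ideal (𝓞 K)),
      P.comap (algebraMap ℤ (𝓞 K)) = Ideal.span {(p : ℤ)} → (p : 𝓞 K) ∈ P := by
    intro p P hcom
    have : ((p : ℤ)) ∈ P.comap (algebraMap ℤ (𝓞 K)) := by
      rw [hcom]; exact Ideal.subset_span rfl
    simpa using this
  by_cases hη0 : η = 0
  · -- degenerate case : η = 0
    refine ⟨0, fun p hp0 hp _ _ np hres hnp h => ?_⟩
    obtain ⟨ζ, ⟨k, hk, hζk⟩, hmem⟩ := h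
    obtain ⟨P, hPmax, hPcom⟩ := hPex p hp
    have hpP : (p : 𝓞 K) ∈ P := hpmemP p P hPcom
    have hζP : ζ ∈ P := by
      have hsub : Ideal.span {(p : 𝓞 K)} ≤ P := by
        rwa [Ideal.span_singleton_le_iff_mem]
      have : η ^ (p - 1) - ζ ∈ P := hsub hmem
      have hz : η ^ (p - 1) = 0 := by
        rw [hη0]; exact zero_pow (Nat.sub_ne_zero_of_lt hp.one_lt)
      rw [hz, zero_sub] at this
      simpa using P.neg_mem this
    have h1 : (1 : 𝓞 K) ∈ P := by
      rw [← hζk]; exact Ideal.pow_mem_of_mem P hζP k hk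
    exact hPmax.ne_top ((Ideal.eq_top_iff_one P).mpr h1)
  -- main case
  have hηK : (η : K) ≠ 0 := by
    simpa using (RingOfIntegers.coe_eq_zero_iff (K := K)).not.mpr hη0
  -- Step B' : no conjugate relation with a root of unity
  have hconj : ∀ σ : K ≃ₐ[ℚ] K, σ ≠ 1 → ∀ z : K, (∃ k : ℕ, 0 < k ∧ z ^ k = 1) →
      σ (η : K) ≠ z * (η : K) := by
    intro σ hσ z ⟨k, hk, hzk⟩ heq
    set u : (K ≃ₐ[ℚ] K) → ℤ := fun ν => if ν = σ then 1 else if ν = 1 then -1 else 0 with hu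
    have hprod : (∏ ν : K ≃ₐ[ℚ] K, (ν (η : K)) ^ (u ν)) = σ (η : K) * (η : K)⁻¹ := by
      rw [← Finset.prod_subset (Finset.subset_univ ({σ, 1} : Finset (K ≃ₐ[ℚ] K)))
        (by intro x _ hx; simp only [Finset.mem_insert, Finset.mem_singleton, not_or] at hx
            simp [hu, hx.1, hx.2])]
      rw [Finset.prod_pair hσ]
      have h1σ : (1 : K ≃ₐ[ℚ] K) ≠ σ := fun hc => hσ hc.symm
      simp [hu, hσ, h1σ, zpow_neg]
    have : (∏ ν : K ≃ₐ[ℚ] K, (ν (η : K)) ^ (u ν)) ^ k = 1 := by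
      rw [hprod, heq, mul_assoc, mul_inv_cancel₀ hηK, mul_one, hzk]
    have h0 := hrank u ⟨k, hk, this⟩ σ
    simp [hu] at h0
  have hinj : Function.Injective (fun σ : K ≃ₐ[ℚ] K => σ (η : K)) := by
    intro σ τ h
    by_contra hne
    have hρ : τ⁻¹ * σ ≠ 1 := by
      intro hc
      rw [inv_mul_eq_one] at hc; exact hne hc.symm
    refine hconj (τ⁻¹ * σ) hρ 1 ⟨1, one_pos, one_pow _⟩ ?_
    have h' : σ (η : K) = τ (η : K) := h
    rw [one_mul, AlgEquiv.mul_apply, h', ← AlgEquiv.mul_apply, inv_mul_cancel,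
      AlgEquiv.one_apply]
  -- integrality facts
  have hintQ : IsIntegral ℚ ((η : K)) := IsIntegral.of_finite ℚ _
  have hintZ : IsIntegral ℤ η := IsIntegral.of_finite ℤ η
  have hintZK : IsIntegral ℤ ((η : K)) := RingOfIntegers.isIntegral_coe η
  set n := Fintype.card (K ≃ₐ[ℚ] K) with hn
  set f : ℚ[X] := minpoly ℚ ((η : K)) with hf
  set fK : K[X] := f.map (algebraMap ℚ K) with hfK
  have hf0 : f ≠ 0 := minpoly.ne_zero hintQ
  have hfK0 : fK ≠ 0 := by
    rw [hfK, Polynomial.map_ne_zero_iff (algebraMap ℚ K).injective]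
    exact hf0
  have hroot : ∀ σ : K ≃ₐ[ℚ] K, fK.eval (σ (η : K)) = 0 := by
    intro σ
    have h0 : Polynomial.aeval ((η : K)) f = 0 := minpoly.aeval ℚ _
    rw [hfK, Polynomial.eval_map, ← Polynomial.aeval_def,
      show (σ (η : K)) = σ.toAlgHom (η : K) from rfl,
      Polynomial.aeval_algHom_apply, h0, map_zero]
  set m : Multiset K := Finset.univ.val.map (fun σ : K ≃ₐ[ℚ] K => σ (η : K)) with hm
  have hmnodup : m.Nodup := Multiset.Nodup.map hinj Finset.univ.nodup
  have hmcard : Multiset.card m = n := by simp [hm, hn, Finset.card_univ]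
  have hmle : m ≤ fK.roots := by
    refine Multiset.le_iff_count.mpr (fun a => ?_)
    by_cases ha : a ∈ m
    · have h1 : Multiset.count a m ≤ 1 := Multiset.nodup_iff_count_le_one.mp hmnodup a
      have h2 : a ∈ fK.roots := by
        rw [Polynomial.mem_roots hfK0]
        obtain ⟨σ, _, rfl⟩ := Multiset.mem_map.mp ha
        exact hroot σ
      exact le_trans h1 (Multiset.count_pos.mpr h2)
    · rw [Multiset.count_eq_zero_of_notMem ha]; exact Nat.zero_le _
  have hdegle : f.natDegree ≤ n := by
    calc f.natDegree ≤ Module.finrank ℚ K := minpoly.natDegree_le _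
      _ = n := by rw [hn, Fintype.card_eq_nat_card]; exact (IsGalois.card_aut_eq_finrank ℚ K).symm
  have hcard_le : Multiset.card fK.roots ≤ n := by
    calc Multiset.card fK.roots ≤ fK.natDegree := fK.card_roots'
    _ = f.natDegree := by rw [hfK, Polynomial.natDegree_map]
    _ ≤ n := hdegle
  have hroots_eq : m = fK.roots :=
    Multiset.eq_of_le_of_card_le hmle (by rw [hmcard]; exact hcard_le)
  have hdegn : f.natDegree = n := by
    refine le_antisymm hdegle ?_
    calc n = Multiset.card m := hmcard.symm
      _ ≤ Multiset.card fK.roots := Multiset.card_le_card hmle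
      _ ≤ fK.natDegree := fK.card_roots'
      _ = f.natDegree := by rw [hfK, Polynomial.natDegree_map]
  have hfKdeg : fK.natDegree = n := by rw [hfK, Polynomial.natDegree_map]; exact hdegn
  have hsplit : fK = ∏ σ : K ≃ₐ[ℚ] K, (X - C (σ (η : K))) := by
    have hmonic : fK.Monic := (minpoly.monic hintQ).map _
    have hsp : Splits fK := by
      apply Polynomial.splits_iff_card_roots.mpr
      rw [← hroots_eq, hmcard, hfKdeg]
    have hprod := Polynomial.Splits.eq_prod_roots_of_monic hsp hmonic
    rw [← hroots_eq, hm, Multiset.map_map] at hprod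
    rw [hprod, Finset.prod_eq_multiset_prod]
    rfl
  -- minpoly over ℤ
  set g : ℤ[X] := minpoly ℤ η with hg
  have hgf : g.map (algebraMap ℤ ℚ) = f := by
    rw [hf, hg, ← minpoly.isIntegrallyClosed_eq_field_fractions ℚ K hintZ]
  have hgK : g.map (algebraMap ℤ K) = fK := by
    rw [hfK, ← hgf, Polynomial.map_map, ← IsScalarTower.algebraMap_eq]
  -- primitive element, power basis
  have htop : IntermediateField.adjoin ℚ {(η : K)} = ⊤ := by
    refine IntermediateField.eq_of_le_of_finrank_eq le_top ?_
    rw [IntermediateField.adjoin.finrank hintQ]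
    rw [show Module.finrank ℚ (⊤ : IntermediateField ℚ K) = Module.finrank ℚ K from
      (IntermediateField.topEquiv (F := ℚ) (E := K)).toLinearEquiv.finrank_eq]
    rw [← hf, hdegn, hn, Fintype.card_eq_nat_card, IsGalois.card_aut_eq_finrank]
  set e : (IntermediateField.adjoin ℚ {(η : K)}) ≃ₐ[ℚ] K :=
    (IntermediateField.equivOfEq htop).trans IntermediateField.topEquiv with he
  set pb : PowerBasis ℚ K := (IntermediateField.adjoin.powerBasis hintQ).map e with hpb
  have hgen : pb.gen = (η : K) := by
    simp [hpb, he, PowerBasis.map_gen]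
  -- discriminant
  have hdisc0 : Algebra.discr ℚ pb.basis ≠ 0 := Algebra.discr_not_zero_of_basis ℚ pb.basis
  have hdiscint : IsIntegral ℤ (Algebra.discr ℚ pb.basis) := by
    refine Algebra.discr_isIntegral ℚ (fun i => ?_)
    rw [PowerBasis.coe_basis]
    exact (hgen ▸ hintZK).pow _
  obtain ⟨d, hd⟩ := IsIntegrallyClosed.isIntegral_iff.mp hdiscint
  have hd0 : d ≠ 0 := by rintro rfl; rw [map_zero] at hd; exact hdisc0 hd.symm
  -- torsion finset and the bound
  haveI : Fintype (NumberField.Units.torsion K) := Fintype.ofFinite _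
  set T : Finset (𝓞 K) :=
    Finset.image (fun u : NumberField.Units.torsion K => ((u : (𝓞 K)ˣ) : 𝓞 K)) Finset.univ with hT
  set σmap := galRestrict ℤ ℚ K (𝓞 K) with hσmap
  set C1 : ℕ := Finset.sup (Finset.univ ×ˢ T)
    (fun q => (Algebra.norm ℤ ((σmap q.1) η - q.2 * η)).natAbs) with hC1
  refine ⟨max C1 d.natAbs, fun p hp0 hp _ _ np hres hnp hcon => ?_⟩
  obtain ⟨ζ, ⟨k, hk, hζk⟩, hmem⟩ := hcon
  obtain ⟨P, hPmax, hPcom⟩ := hPex p hp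
  haveI := hPmax
  have hpP : (p : 𝓞 K) ∈ P := hpmemP p P hPcom
  haveI hFp : Fact p.Prime := ⟨hp⟩
  haveI := hPmax.isPrime
  have hintdvd : ∀ mz : ℤ, algebraMap ℤ (𝓞 K) mz ∈ P ↔ (p : ℤ) ∣ mz := by
    intro mz
    rw [← Ideal.mem_comap, hPcom, Ideal.mem_span_singleton]
  haveI hcharF : CharP (𝓞 K ⧸ P) p := by
    constructor
    intro a
    rw [← map_natCast (Ideal.Quotient.mk P) a, Ideal.Quotient.eq_zero_iff_mem]
    have hcast : ((a : ℕ) : 𝓞 K) = algebraMap ℤ (𝓞 K) (a : ℤ) := by push_cast; rfl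
    rw [hcast, hintdvd]
    exact Int.natCast_dvd_natCast
  -- the Frobenius congruence via Dedekind's argument
  have hA : Polynomial.aeval (η ^ p) g ∈ P := by
    rw [← Ideal.Quotient.eq_zero_iff_mem, ← Ideal.Quotient.mkₐ_eq_mk ℤ P]
    rw [← Polynomial.aeval_algHom_apply (Ideal.Quotient.mkₐ ℤ P) (η ^ p) g, map_pow]
    erw [aux_aeval_pow_char p ((Ideal.Quotient.mkₐ ℤ P) η) g]
    erw [Polynomial.aeval_algHom_apply (Ideal.Quotient.mkₐ ℤ P) η g]
    rw [hg, minpoly.aeval, map_zero, zero_pow hp.pos.ne']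
  have hEx : ∃ σ : K ≃ₐ[ℚ] K, η ^ p - σmap σ η ∈ P := by
    have hBA : (∏ σ : K ≃ₐ[ℚ] K, (η ^ p - σmap σ η)) = Polynomial.aeval (η ^ p) g := by
      apply RingOfIntegers.coe_injective
      have hcoe : (algebraMap (𝓞 K) K) ((Polynomial.aeval (η ^ p)) g)
          = Polynomial.aeval ((algebraMap (𝓞 K) K) (η ^ p)) g :=
        (Polynomial.aeval_algHom_apply (IsScalarTower.toAlgHom ℤ (𝓞 K) K) (η ^ p) g).symm
      rw [map_prod, hcoe, Polynomial.aeval_def, Polynomial.eval₂_eq_eval_map, hgK, hsplit,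
        Polynomial.eval_prod]
      refine Finset.prod_congr rfl (fun σ _ => ?_)
      rw [Polynomial.eval_sub, Polynomial.eval_X, Polynomial.eval_C]
      rw [map_sub, map_pow, algebraMap_galRestrict_apply ℤ σ η]
    rw [← hBA] at hA
    obtain ⟨σ, _, hσ⟩ := (Ideal.IsPrime.prod_mem_iff).mp hA
    exact ⟨σ, hσ⟩
  obtain ⟨σ, hσP⟩ := hEx
  have hsub : Ideal.span {(p : 𝓞 K)} ≤ P := by rwa [Ideal.span_singleton_le_iff_mem]
  have hmem' : η ^ (p - 1) - ζ ∈ P := hsub hmem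
  have hstep : η ^ p - ζ * η ∈ P := by
    have heq : η ^ p - ζ * η = (η ^ (p - 1) - ζ) * η := by
      rw [sub_mul, ← pow_succ, Nat.sub_add_cancel hp.one_lt.le]
    rw [heq]; exact P.mul_mem_right _ hmem'
  by_cases hσ1 : σ = 1
  · -- σ = 1 : residue field too small
    rw [hσ1, map_one, AlgEquiv.one_apply] at hσP
    have hyp : (Ideal.Quotient.mk P η) ^ p = Ideal.Quotient.mk P η := by
      rw [← map_pow, ← sub_eq_zero, ← map_sub, Ideal.Quotient.eq_zero_iff_mem]
      exact hσP
    have hdF : ((d : 𝓞 K ⧸ P)) ≠ 0 := by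
      intro hc
      have hc2 : ((d : 𝓞 K)) ∈ P := by
        rw [← Ideal.Quotient.eq_zero_iff_mem, map_intCast]
        exact hc
      have hc3 : (p : ℤ) ∣ d := by
        rw [← hintdvd d, show (algebraMap ℤ (𝓞 K)) d = ((d : 𝓞 K)) from eq_intCast _ d]
        exact hc2
      have h1 : p ≤ d.natAbs := Nat.le_of_dvd (Int.natAbs_pos.mpr hd0)
        (by simpa using Int.natAbs_dvd_natAbs.mpr hc3)
      have h2 : d.natAbs ≤ max C1 d.natAbs := le_max_right _ _
      omega
    have hall : ∀ y : 𝓞 K ⧸ P, y ^ p = y := by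
      intro y
      obtain ⟨x, rfl⟩ := Ideal.Quotient.mk_surjective (I := P) y
      have hadj := Algebra.discr_mul_isIntegral_mem_adjoin (R := ℤ) (K := ℚ) (L := K)
        (hgen ▸ hintZK) (RingOfIntegers.isIntegral_coe x)
      rw [hgen, Algebra.adjoin_singleton_eq_range_aeval] at hadj
      obtain ⟨q, hq⟩ := hadj
      replace hq : Polynomial.aeval ((η : K)) q
          = Algebra.discr ℚ pb.basis • (algebraMap (𝓞 K) K) x := hq
      have hqZ : Polynomial.aeval η q = d • x := by
        apply RingOfIntegers.coe_injective
        have hcoe : (algebraMap (𝓞 K) K) ((Polynomial.aeval η) q)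
            = Polynomial.aeval ((algebraMap (𝓞 K) K) η) q :=
          (Polynomial.aeval_algHom_apply (IsScalarTower.toAlgHom ℤ (𝓞 K) K) η q).symm
        rw [hcoe, show (algebraMap (𝓞 K) K) η = ((η : 𝓞 K) : K) from rfl, hq, ← hd,
          algebraMap_smul, map_zsmul]
      have haq : Ideal.Quotient.mk P (Polynomial.aeval η q)
          = Polynomial.aeval (Ideal.Quotient.mk P η) q := by
        rw [← Ideal.Quotient.mkₐ_eq_mk ℤ P,
          Polynomial.aeval_algHom_apply (Ideal.Quotient.mkₐ ℤ P) η q]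
      have key : ((d : 𝓞 K ⧸ P) * Ideal.Quotient.mk P x) ^ p
          = (d : 𝓞 K ⧸ P) * Ideal.Quotient.mk P x := by
        have h1 : Ideal.Quotient.mk P (d • x) = (d : 𝓞 K ⧸ P) * Ideal.Quotient.mk P x := by
          rw [map_zsmul, zsmul_eq_mul]
        rw [← h1, ← hqZ, haq]
        erw [← aux_aeval_pow_char p (Ideal.Quotient.mk P η) q, hyp]
        rfl
      rw [mul_pow, aux_intCast_pow_char p d] at key
      exact mul_left_cancel₀ hdF key
    -- cardinality contradiction
    set q1 : Polynomial (𝓞 K ⧸ P) := X ^ p - X with hq1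
    have hq1deg : q1.natDegree = p := by
      rw [hq1, Polynomial.natDegree_sub_eq_left_of_natDegree_lt, Polynomial.natDegree_X_pow]
      rw [Polynomial.natDegree_X_pow, Polynomial.natDegree_X]
      exact hp.one_lt
    have hq10 : q1 ≠ 0 := by
      intro hc
      rw [hc, Polynomial.natDegree_zero] at hq1deg
      exact hp.pos.ne hq1deg
    haveI hFin : Finite (𝓞 K ⧸ P) := by
      refine Set.finite_univ_iff.mp ?_
      refine Set.Finite.subset (Polynomial.finite_setOf_isRoot hq10) (fun y _ => ?_)
      simp only [Set.mem_setOf_eq, Polynomial.IsRoot, hq1, Polynomial.eval_sub,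
        Polynomial.eval_pow, Polynomial.eval_X]
      rw [hall y, sub_self]
    haveI : Fintype (𝓞 K ⧸ P) := Fintype.ofFinite _
    have hcardle : Fintype.card (𝓞 K ⧸ P) ≤ p := by
      have hsub2 : (Finset.univ : Finset (𝓞 K ⧸ P)) ⊆ q1.roots.toFinset := by
        intro y _
        rw [Multiset.mem_toFinset, Polynomial.mem_roots hq10]
        simp only [Polynomial.IsRoot, hq1, Polynomial.eval_sub, Polynomial.eval_pow,
          Polynomial.eval_X]
        rw [hall y, sub_self]
      calc Fintype.card (𝓞 K ⧸ P) = (Finset.univ : Finset (𝓞 K ⧸ P)).card :=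
            (Finset.card_univ).symm
        _ ≤ q1.roots.toFinset.card := Finset.card_le_card hsub2
        _ ≤ Multiset.card q1.roots := Multiset.toFinset_card_le _
        _ ≤ q1.natDegree := q1.card_roots'
        _ = p := hq1deg
    haveI hLies : P.LiesOver (Ideal.span {(p : ℤ)}) := ⟨hPcom.symm⟩
    haveI hspanmax : (Ideal.span {(p : ℤ)}).IsMaximal := by
      refine PrincipalIdealRing.isMaximal_of_irreducible ?_
      exact (Int.prime_iff_natAbs_prime.mpr (by simpa using hp)).irreducible
    have hfr := hres P hPmax.isPrime hpP
    rw [Ideal.inertiaDeg_algebraMap] at hfr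
    letI : Fintype (ℤ ⧸ Ideal.span {(p : ℤ)}) :=
      Fintype.ofEquiv (ZMod p) (Int.quotientSpanNatEquivZMod p).toEquiv.symm
    letI : Field (ℤ ⧸ Ideal.span {(p : ℤ)}) := Ideal.Quotient.field _
    haveI : NeZero p := ⟨hp.pos.ne'⟩
    have hck : Fintype.card (ℤ ⧸ Ideal.span {(p : ℤ)}) = p := by
      have h := Fintype.card_congr (Int.quotientSpanNatEquivZMod p).toEquiv
      rwa [ZMod.card] at h
    have hcardF : Fintype.card (𝓞 K ⧸ P) = p ^ np := by
      rw [Module.card_eq_pow_finrank (K := ℤ ⧸ Ideal.span {(p : ℤ)}) (V := 𝓞 K ⧸ P), hck, hfr]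
    rw [hcardF] at hcardle
    have hnple : np ≤ 1 := by
      exact (Nat.pow_le_pow_iff_right hp.one_lt).mp (by rw [pow_one]; exact hcardle)
    omega
  · -- σ ≠ 1 : norm bound
    set t : 𝓞 K := σmap σ η - ζ * η with ht
    have htP : t ∈ P := by
      have heq : t = (η ^ p - ζ * η) - (η ^ p - σmap σ η) := by rw [ht]; ring
      rw [heq]; exact P.sub_mem hstep hσP
    have htK : (algebraMap (𝓞 K) K) t = σ (η : K) - (ζ : K) * (η : K) := by
      rw [ht, map_sub, map_mul, algebraMap_galRestrict_apply ℤ σ η]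
    have ht0 : t ≠ 0 := by
      intro hc
      refine hconj σ hσ1 (ζ : K) ⟨k, hk, ?_⟩ ?_
      · have := congrArg (algebraMap (𝓞 K) K) hζk
        push_cast at this
        exact_mod_cast this
      · have h2 := congrArg (algebraMap (𝓞 K) K) hc
        rw [htK, map_zero, sub_eq_zero] at h2
        exact h2
    set N : ℤ := Algebra.norm ℤ t with hN
    have hN0 : N ≠ 0 := by
      intro hc
      have h1 : (N : ℚ) = Algebra.norm ℚ ((t : 𝓞 K) : K) := Algebra.coe_norm_int t
      rw [hc, Int.cast_zero] at h1
      have h2 : ((t : 𝓞 K) : K) ≠ 0 := by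
        simpa using (RingOfIntegers.coe_ne_zero_iff (K := K)).mpr ht0
      exact h2 (Algebra.norm_eq_zero_iff.mp h1.symm)
    have hNP : algebraMap ℤ (𝓞 K) N ∈ P := by
      have h2 : algebraMap ℤ (𝓞 K) N = ∏ τ : K ≃ₐ[ℚ] K, σmap τ t := by
        apply RingOfIntegers.coe_injective
        have h3 : (algebraMap (𝓞 K) K) ((algebraMap ℤ (𝓞 K)) N) = algebraMap ℚ K ((N : ℚ)) := by
          rw [← IsScalarTower.algebraMap_apply ℤ (𝓞 K) K N,
            show ((N : ℚ)) = algebraMap ℤ ℚ N from (eq_intCast _ N).symm,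
            ← IsScalarTower.algebraMap_apply ℤ ℚ K N]
        have h4 := Algebra.norm_eq_prod_automorphisms ℚ ((t : 𝓞 K) : K)
        rw [map_prod, h3, show ((N : ℚ)) = Algebra.norm ℚ ((t : 𝓞 K) : K) from
          Algebra.coe_norm_int t, h4]
        refine Finset.prod_congr rfl (fun τ _ => ?_)
        rw [algebraMap_galRestrict_apply ℤ τ t]
      rw [h2, ← Finset.prod_erase_mul _ _ (Finset.mem_univ (1 : K ≃ₐ[ℚ] K))]
      apply P.mul_mem_left
      rw [map_one, AlgEquiv.one_apply]
      exact htP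
    have hdvd : (p : ℤ) ∣ N := (hintdvd N).mp hNP
    have hmemT : ζ ∈ T := by
      have hkp : ζ * ζ ^ (k - 1) = 1 := by
        rw [← pow_succ', Nat.sub_add_cancel hk]
        exact hζk
      refine Finset.mem_image.mpr ⟨⟨⟨ζ, ζ ^ (k - 1), hkp, by rw [mul_comm]; exact hkp⟩, ?_⟩,
        Finset.mem_univ _, rfl⟩
      rw [NumberField.Units.torsion, CommGroup.mem_torsion, isOfFinOrder_iff_pow_eq_one]
      exact ⟨k, hk, Units.ext (by rw [Units.val_pow_eq_pow_val]; exact hζk)⟩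
    have hle : N.natAbs ≤ C1 := by
      have hmemprod : (σ, ζ) ∈ (Finset.univ ×ˢ T) :=
        Finset.mem_product.mpr ⟨Finset.mem_univ _, hmemT⟩
      have := Finset.le_sup (f := fun q : (K ≃ₐ[ℚ] K) × 𝓞 K =>
        (Algebra.norm ℤ ((σmap q.1) η - q.2 * η)).natAbs) hmemprod
      simpa [hN, ht] using this
    have hple : p ≤ N.natAbs := Nat.le_of_dvd (Int.natAbs_pos.mpr hN0)
      (by simpa using Int.natAbs_dvd_natAbs.mpr hdvd)
    have : C1 ≤ max C1 d.natAbs := le_max_left _ _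
    omega
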